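/- Let λⱼ = κ cⱼ/σ with σ = Σⱼcⱼ ≠ 0 and κ ∈ ℤ. Define ψⱼ = ∂F/∂xⱼ where F is the coefficient of x^{−1} in the formal expansion of ∏_{j=0}^{n}(x−x_j)^{λ_j} at infinity. Then ψ₀ + ψ₁ + ⋯ + ψₙ = 0 identically as polynomials in x₀,...,xₙ. -/

import Mathlib

open MvPolynomial Finset in
/-- For `λⱼ = κcⱼ/σ`, `σ = Σcⱼ ≠ 0`, `κ ∈ ℤ`, the partial derivatives `ψⱼ = ∂F/∂xⱼ` of the
residue-at-infinity polynomial `F = [x^{−1}] ∏ⱼ(x−xⱼ)^{λⱼ}` (the coefficient `h (κ+1)` of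
the series `x^κ exp(−Σ_{s≥1} p_s x^{−s}/s)`, and `0` when `κ+1 < 0`) sum to zero. -/
theorem stmt_12 (n : ℕ) (κ : ℤ) (c : Fin (n + 1) → ℂ)
    (σ : ℂ) (hσdef : σ = ∑ j, c j) (hσ : σ ≠ 0)
    (lam : Fin (n + 1) → ℂ) (hlam : ∀ j, lam j = κ * c j / σ)
    (p : ℕ → MvPolynomial (Fin (n + 1)) ℂ)
    (hp : ∀ s, p s = ∑ i, C (lam i) * X i ^ s)
    (h : ℕ → MvPolynomial (Fin (n + 1)) ℂ) (h0 : h 0 = 1)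
    (hrec : ∀ m : ℕ, ((m : ℂ) + 1) • h (m + 1) = -∑ s ∈ range (m + 1), p (s + 1) * h (m - s))
    (F : MvPolynomial (Fin (n + 1)) ℂ)
    (hF : F = if 0 ≤ κ + 1 then h (κ + 1).toNat else 0) :
    (∑ j, pderiv j F) = 0 := by
  classical
  set D : Derivation ℂ (MvPolynomial (Fin (n+1)) ℂ) (MvPolynomial (Fin (n+1)) ℂ) :=
    ∑ j, pderiv j with hD
  have hDapp : ∀ q, D q = ∑ j, pderiv j q := by
    intro q
    rw [hD]
    induction (Finset.univ : Finset (Fin (n+1))) using Finset.induction_on with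
    | empty => simp
    | insert _ _ hx ih => simp_all [Finset.sum_insert hx]
  suffices hgoal : D F = 0 by rw [← hDapp]; exact hgoal
  have sum_lam : ∑ i, lam i = (κ : ℂ) := by
    simp only [hlam, div_eq_mul_inv, ← Finset.sum_mul, ← Finset.mul_sum, ← hσdef]
    field_simp
  have DX : ∀ i, D (X i : MvPolynomial (Fin (n+1)) ℂ) = 1 := by
    intro i
    rw [hDapp]
    rw [Finset.sum_eq_single i (fun j _ hne => pderiv_X_of_ne (Ne.symm hne))
      (fun hi => absurd (Finset.mem_univ i) hi)]
    exact pderiv_X_self i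
  have DXpow : ∀ (i : Fin (n+1)) (s : ℕ), D (X i ^ (s+1)) = ((s:ℂ)+1) • X i ^ s := by
    intro i s
    induction s with
    | zero => simp [DX]
    | succ t ih =>
      have : (X i : MvPolynomial (Fin (n+1)) ℂ) ^ (t+2) = X i * X i ^ (t+1) := by ring
      rw [this, D.leibniz, DX, ih]
      simp only [smul_eq_mul, mul_one, ← C_mul']
      push_cast
      simp only [map_add, map_one, map_ofNat]
      ring
  have Dp : ∀ s : ℕ, D (p (s+1)) = ((s:ℂ)+1) • p s := by
    intro s
    rw [hp, hp, map_sum, Finset.smul_sum]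
    refine Finset.sum_congr rfl fun i _ => ?_
    rw [C_mul', D.map_smul, DXpow, C_mul']
    rw [smul_comm]
  have DC : ∀ a : ℂ, D (C a : MvPolynomial (Fin (n+1)) ℂ) = 0 := fun a => by
    rw [hDapp]; simp [pderiv_C]
  have key : ∀ m : ℕ, D (h (m+1)) = ((m:ℂ) - κ) • h m := by
    intro m
    induction m using Nat.strong_induction_on with
    | _ m ih =>
    have hp0 : p 0 = C (κ:ℂ) := by
      rw [hp]
      simp only [pow_zero, mul_one]
      rw [← map_sum C lam Finset.univ, sum_lam]
    have e := congrArg D (hrec m)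
    rw [D.map_smul, map_neg, map_sum] at e
    have estep : ∀ s ∈ range (m+1), D (p (s+1) * h (m-s)) =
        ((s:ℂ)+1) • (p s * h (m-s)) + p (s+1) * D (h (m-s)) := by
      intro s _
      rw [D.leibniz, Dp s]
      simp only [smul_eq_mul]
      rw [mul_smul_comm, mul_comm (h (m-s)) (p s)]
      exact add_comm _ _
    have hsum2 : ∑ s ∈ range m, p (s+1) * h (m-1-s) = -((m:ℂ) • h m) := by
      cases m with
      | zero => simp
      | succ t =>
        simp only [Nat.add_sub_cancel]
        rw [show ((t+1:ℕ):ℂ) = (t:ℂ)+1 by push_cast; ring, hrec t, neg_neg]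
    have hT : ∑ s ∈ range (m+1), D (p (s+1) * h (m-s))
        = ((κ:ℂ) - ((m:ℂ)+1-κ) * m) • h m := by
      rw [Finset.sum_congr rfl estep, Finset.sum_add_distrib, Finset.sum_range_succ',
          Finset.sum_range_succ]
      rw [Nat.sub_self, Nat.sub_zero, h0, D.map_one_eq_zero, mul_zero, add_zero, hp0,
          Nat.cast_zero, zero_add, one_smul, C_mul']
      have hterm : ∀ s ∈ range m, p (s+1) * D (h (m-s))
          = ((m:ℂ)-1-s-κ) • (p (s+1) * h (m-1-s)) := by
        intro s hs
        have hs' : s < m := Finset.mem_range.mp hs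
        obtain ⟨t, ht⟩ : ∃ t, m = t + s + 1 := ⟨m - s - 1, by omega⟩
        have h1 : m - s = t + 1 := by omega
        have h2 : m - 1 - s = t := by omega
        rw [h1, h2, ih t (by omega), mul_smul_comm]
        congr 1
        subst ht; push_cast; ring
      have hterm1 : ∀ s ∈ range m, ((↑(s+1)+1:ℂ)) • (p (s+1) * h (m-(s+1)))
          = ((s:ℂ)+2) • (p (s+1) * h (m-1-s)) := by
        intro s hs
        have h2 : m - (s+1) = m - 1 - s := by omega
        rw [h2]; congr 1; push_cast; ring
      rw [Finset.sum_congr rfl hterm1, Finset.sum_congr rfl hterm, add_right_comm,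
          ← Finset.sum_add_distrib]
      have hterm2 : ∀ s ∈ range m, ((s:ℂ)+2) • (p (s+1) * h (m-1-s))
          + ((m:ℂ)-1-s-κ) • (p (s+1) * h (m-1-s))
          = ((m:ℂ)+1-κ) • (p (s+1) * h (m-1-s)) := by
        intro s _; rw [← add_smul]; congr 1; ring
      rw [Finset.sum_congr rfl hterm2, ← Finset.smul_sum, hsum2]
      module
    rw [hT] at e
    have hne : ((m:ℂ)+1) ≠ 0 := Nat.cast_add_one_ne_zero m
    refine smul_right_injective (MvPolynomial (Fin (n+1)) ℂ) hne ?_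
    show ((m:ℂ)+1) • D (h (m+1)) = ((m:ℂ)+1) • (((m:ℂ) - κ) • h m)
    rw [e]
    module
  -- final
  rw [hF]
  by_cases hκ : 0 ≤ κ + 1
  · rw [if_pos hκ]
    rcases Nat.eq_zero_or_pos (κ+1).toNat with ht0 | htpos
    · rw [ht0, h0, D.map_one_eq_zero]
    · obtain ⟨k, hk⟩ : ∃ k, (κ+1).toNat = k + 1 := ⟨(κ+1).toNat - 1, by omega⟩
      rw [hk, key k]
      have : ((k:ℤ)) = κ := by
        have := Int.toNat_of_nonneg hκ
        omega
      have hc : (k : ℂ) = (κ : ℂ) := by exact_mod_cast congrArg (Int.cast : ℤ → ℂ) this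
      rw [hc, sub_self, zero_smul]
  · rw [if_neg hκ, map_zero]
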